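/- There do not exist a positive-edge-weighted tree T with four distinguished leaves a, b, c, d and reals 0 ≤ d_min ≤ d_max such that: d_min ≤ d_T(a,b) ≤ d_max, d_min ≤ d_T(c,d) ≤ d_max, d_T(b,c) < d_min, d_T(a,d) < d_min, d_T(a,c) > d_max, and d_T(b,d) > d_max. (Forbidden coloring f-c(2K_2)b.) -/

import Mathlib

set_option linter.unusedSectionVars false

open SimpleGraph

/-- A tree with positive real edge weights. -/
structure WTree (α : Type) where
  g : SimpleGraph α
  isTree : g.IsTree
  w : α → α → ℝ
  w_symm : ∀ a b, w a b = w b a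
  w_pos : ∀ a b, g.Adj a b → 0 < w a b

/-- The weighted distance between two vertices of a weighted tree: the sum of
the weights of the edges on the unique path between them. -/
noncomputable def WTree.dist {α : Type} (T : WTree α) (u v : α) : ℝ :=
  (((T.isTree.existsUnique_path u v).exists.choose).darts.map
    (fun d => T.w d.toProd.1 d.toProd.2)).sum

/-- A vertex of a weighted tree is a leaf if it has exactly one neighbor. -/
def WTree.IsLeaf {α : Type} (T : WTree α) (v : α) : Prop :=
  ∃! u, T.g.Adj v u

/-- `G = PCG(T, dmin, dmax)` via the leaf-assignment `f`. -/
def IsPCGWith {V β : Type} (G : SimpleGraph V) (T : WTree β) (f : V → β)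
    (dmin dmax : ℝ) : Prop :=
  Function.Injective f ∧ (∀ v, T.IsLeaf (f v)) ∧ (∀ b, T.IsLeaf b → ∃ v, f v = b) ∧
    ∀ u v : V, u ≠ v →
      (G.Adj u v ↔ dmin ≤ T.dist (f u) (f v) ∧ T.dist (f u) (f v) ≤ dmax)

/-- A graph is a pairwise compatibility graph. -/
def IsPCG {V : Type} (G : SimpleGraph V) : Prop :=
  ∃ (β : Type) (T : WTree β) (f : V → β) (dmin dmax : ℝ),
    0 ≤ dmin ∧ dmin ≤ dmax ∧ IsPCGWith G T f dmin dmax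

/- ### Auxiliary machinery -/

private lemma list_sum_map_le {γ : Type} (f : γ → ℝ) (l₁ : List γ) :
    ∀ l₂ : List γ, l₁.Nodup → l₁ ⊆ l₂ → (∀ x ∈ l₂, 0 ≤ f x) →
      (l₁.map f).sum ≤ (l₂.map f).sum := by
  induction l₁ with
  | nil =>
    intro l₂ _ _ hf
    simpa using List.sum_nonneg (fun x hx => by
      obtain ⟨e, he, rfl⟩ := List.mem_map.1 hx; exact hf e he)
  | cons a t ih =>
    intro l₂ hnd hsub hf
    obtain ⟨s, r, rfl⟩ := List.append_of_mem (hsub List.mem_cons_self)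
    have hna : a ∉ t := (List.nodup_cons.1 hnd).1
    have htsub : t ⊆ s ++ r := by
      intro x hx
      have hx2 := hsub (List.mem_cons_of_mem a hx)
      rw [List.mem_append] at hx2 ⊢
      rcases hx2 with h | h
      · exact Or.inl h
      · rcases List.mem_cons.1 h with rfl | h
        · exact absurd hx hna
        · exact Or.inr h
    have hf' : ∀ x ∈ s ++ r, 0 ≤ f x := by
      intro x hx
      apply hf
      rw [List.mem_append] at hx ⊢
      rcases hx with h | h
      · exact Or.inl h
      · exact Or.inr (List.mem_cons_of_mem _ h)
    have hih := ih (s ++ r) (List.nodup_cons.1 hnd).2 htsub hf'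
    simp only [List.map_append, List.sum_append, List.map_cons, List.sum_cons] at hih ⊢
    linarith

namespace WTree

variable {α : Type} [DecidableEq α] (T : WTree α)

/-- Edge weight as a function on `Sym2`. -/
noncomputable def we : Sym2 α → ℝ := Sym2.lift ⟨T.w, T.w_symm⟩

/-- Total weight of a walk. -/
noncomputable def wt {u v : α} (p : T.g.Walk u v) : ℝ := (p.edges.map T.we).sum

lemma we_nonneg {e : Sym2 α} (he : e ∈ T.g.edgeSet) : 0 ≤ T.we e := by
  induction e using Sym2.ind with
  | _ x y => exact le_of_lt (by simpa [we] using T.w_pos x y he)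

lemma wt_darts {u v : α} (p : T.g.Walk u v) :
    T.wt p = (p.darts.map (fun d => T.w d.toProd.1 d.toProd.2)).sum := by
  have h : ∀ d : T.g.Dart, T.we d.edge = T.w d.toProd.1 d.toProd.2 := by
    rintro ⟨⟨x, y⟩, h⟩; simp [we, Dart.edge]
  simp only [wt, Walk.edges, List.map_map, Function.comp_def, h]

lemma dist_eq_wt {u v : α} {p : T.g.Walk u v} (hp : p.IsPath) : T.dist u v = T.wt p := by
  have h := (T.isTree.existsUnique_path u v).unique
    ((T.isTree.existsUnique_path u v).exists.choose_spec) hp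
  unfold WTree.dist
  rw [← T.wt_darts, h]

lemma wt_append {u v x : α} (p : T.g.Walk u v) (q : T.g.Walk v x) :
    T.wt (p.append q) = T.wt p + T.wt q := by
  simp [wt, Walk.edges_append]

lemma wt_reverse {u v : α} (p : T.g.Walk u v) : T.wt p.reverse = T.wt p := by
  simp [wt, Walk.edges_reverse, List.map_reverse, List.sum_reverse]

lemma dist_le_wt {u v : α} (p : T.g.Walk u v) : T.dist u v ≤ T.wt p := by
  rw [T.dist_eq_wt (Walk.bypass_isPath p)]
  unfold wt
  exact list_sum_map_le T.we _ _ (Walk.bypass_isPath p).edges_nodup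
    (Walk.edges_bypass_subset p)
    (fun e he => T.we_nonneg (Walk.edges_subset_edgeSet p he))

lemma dist_symm (u v : α) : T.dist u v = T.dist v u := by
  obtain ⟨p, hp⟩ := (T.isTree.existsUnique_path u v).exists
  rw [T.dist_eq_wt hp, T.dist_eq_wt hp.reverse, wt_reverse]

lemma dist_triangle (u x v : α) : T.dist u v ≤ T.dist u x + T.dist x v := by
  obtain ⟨p, hp⟩ := (T.isTree.existsUnique_path u x).exists
  obtain ⟨q, hq⟩ := (T.isTree.existsUnique_path x v).exists
  calc T.dist u v ≤ T.wt (p.append q) := T.dist_le_wt _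
    _ = T.dist u x + T.dist x v := by rw [T.wt_append, T.dist_eq_wt hp, T.dist_eq_wt hq]

lemma split {u v x : α} (p : T.g.Walk u v) (hp : p.IsPath) (hx : x ∈ p.support) :
    T.dist u x + T.dist x v = T.dist u v := by
  rw [T.dist_eq_wt (hp.takeUntil hx), T.dist_eq_wt (hp.dropUntil hx), T.dist_eq_wt hp,
    ← T.wt_append, p.take_spec hx]

lemma med_aux : ∀ (n : ℕ) (a b c : α) (p : T.g.Walk a b) (q : T.g.Walk a c) (r : T.g.Walk b c),
    p.IsPath → q.IsPath → r.IsPath → p.length + q.length ≤ n →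
    ∃ m, m ∈ p.support ∧ m ∈ q.support ∧ m ∈ r.support := by
  intro n
  induction n with
  | zero =>
    intro a b c p q r hp hq hr hn
    cases p with
    | nil =>
      exact ⟨a, Walk.start_mem_support _, Walk.start_mem_support _, Walk.start_mem_support _⟩
    | cons h p₁ => rw [Walk.length_cons] at hn; omega
  | succ n ih =>
    intro a b c p q r hp hq hr hn
    cases p with
    | nil =>
      exact ⟨a, Walk.start_mem_support _, Walk.start_mem_support _, Walk.start_mem_support _⟩
    | @cons _ a₁ _ hadj p₁ =>
      cases q with
      | nil =>
        exact ⟨a, Walk.start_mem_support _, Walk.start_mem_support _, Walk.end_mem_support _⟩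
      | @cons _ a₂ _ hadj' q₁ =>
        by_cases h12 : a₁ = a₂
        · subst h12
          rw [Walk.length_cons] at hn
          rw [Walk.length_cons] at hn
          obtain ⟨m, h1, h2, h3⟩ := ih a₁ b c p₁ q₁ r hp.of_cons hq.of_cons hr (by omega)
          refine ⟨m, ?_, ?_, h3⟩
          · rw [Walk.support_cons]; exact List.mem_cons_of_mem _ h1
          · rw [Walk.support_cons]; exact List.mem_cons_of_mem _ h2
        · have hanp : a ∉ p₁.support := ((Walk.cons_isPath_iff _ _).1 hp).2
          have hanq : a ∉ q₁.support := ((Walk.cons_isPath_iff _ _).1 hq).2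
          have key : ∀ x, x ∈ (Walk.cons hadj p₁).support →
              x ∈ (Walk.cons hadj' q₁).support → x = a := by
            intro x hx1 hx2
            by_contra hxa
            rw [Walk.support_cons, List.mem_cons] at hx1 hx2
            have hx1' : x ∈ p₁.support := hx1.resolve_left hxa
            have hx2' : x ∈ q₁.support := hx2.resolve_left hxa
            have hW1 : (Walk.cons hadj (p₁.takeUntil x hx1')).IsPath :=
              (hp.of_cons.takeUntil hx1').cons
                (fun ha => hanp (Walk.support_takeUntil_subset _ hx1' ha))
            have hW2 : (Walk.cons hadj' (q₁.takeUntil x hx2')).IsPath :=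
              (hq.of_cons.takeUntil hx2').cons
                (fun ha => hanq (Walk.support_takeUntil_subset _ hx2' ha))
            have heq := (T.isTree.existsUnique_path a x).unique hW1 hW2
            have hs := congrArg Walk.support heq
            rw [Walk.support_cons, Walk.support_cons,
              (p₁.takeUntil x hx1').support_eq_cons,
              (q₁.takeUntil x hx2').support_eq_cons] at hs
            simp only [List.cons.injEq] at hs
            exact h12 hs.2.1
          have hr2 : ((Walk.cons hadj p₁).reverse.append (Walk.cons hadj' q₁)).IsPath := by
            apply Walk.IsPath.mk'
            rw [Walk.support_append, List.nodup_append]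
            refine ⟨hp.reverse.support_nodup, hq.support_nodup.tail, ?_⟩
            intro x hx1 y hx2 hxy
            subst hxy
            have hx1' : x ∈ (Walk.cons hadj p₁).support := by
              rw [Walk.support_reverse] at hx1
              exact List.mem_reverse.1 hx1
            have hx2' : x ∈ (Walk.cons hadj' q₁).support := by
              rw [(Walk.cons hadj' q₁).support_eq_cons]
              exact List.mem_cons_of_mem _ hx2
            have hxa := key x hx1' hx2'
            subst hxa
            have := hq.support_nodup
            rw [(Walk.cons hadj' q₁).support_eq_cons] at this
            exact (List.nodup_cons.1 this).1 hx2
          have hru := (T.isTree.existsUnique_path b c).unique hr hr2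
          refine ⟨a, Walk.start_mem_support _, Walk.start_mem_support _, ?_⟩
          rw [hru, Walk.mem_support_append_iff]
          left
          rw [Walk.support_reverse]
          exact List.mem_reverse.2 (Walk.start_mem_support _)

lemma median (a b c : α) (q : T.g.Walk a c) (hq : q.IsPath) : ∃ m, m ∈ q.support ∧
    T.dist a m + T.dist m b = T.dist a b ∧
    T.dist a m + T.dist m c = T.dist a c ∧
    T.dist b m + T.dist m c = T.dist b c := by
  obtain ⟨p, hp⟩ := (T.isTree.existsUnique_path a b).exists
  obtain ⟨r, hr⟩ := (T.isTree.existsUnique_path b c).exists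
  obtain ⟨m, h1, h2, h3⟩ := T.med_aux (p.length + q.length) a b c p q r hp hq hr le_rfl
  exact ⟨m, h2, T.split p hp h1, T.split q hq h2, T.split r hr h3⟩

lemma order3 {a c x y : α} (q : T.g.Walk a c) (hq : q.IsPath)
    (hx : x ∈ q.support) (hy : y ∈ q.support) :
    T.dist a x + T.dist x y + T.dist y c = T.dist a c ∨
    T.dist a y + T.dist y x + T.dist x c = T.dist a c := by
  have h1 : T.dist a x + T.dist x c = T.dist a c := T.split q hq hx
  have hy' : y ∈ (q.takeUntil x hx).support ∨ y ∈ (q.dropUntil x hx).support := by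
    rw [← Walk.mem_support_append_iff, q.take_spec hx]; exact hy
  rcases hy' with h | h
  · right
    have h2 := T.split _ (hq.takeUntil hx) h
    linarith
  · left
    have h2 := T.split _ (hq.dropUntil hx) h
    linarith

end WTree

theorem forbidden_2K2_b : ¬ ∃ (β : Type) (T : WTree β) (a b c d : β) (dmin dmax : ℝ),
    T.IsLeaf a ∧ T.IsLeaf b ∧ T.IsLeaf c ∧ T.IsLeaf d ∧
    a ≠ b ∧ a ≠ c ∧ a ≠ d ∧ b ≠ c ∧ b ≠ d ∧ c ≠ d ∧
    0 ≤ dmin ∧ dmin ≤ dmax ∧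
    dmin ≤ T.dist a b ∧ T.dist a b ≤ dmax ∧
    dmin ≤ T.dist c d ∧ T.dist c d ≤ dmax ∧
    T.dist b c < dmin ∧ T.dist a d < dmin ∧
    dmax < T.dist a c ∧ dmax < T.dist b d := by
  classical
  rintro ⟨β, T, a, b, c, d, dmin, dmax, -, -, -, -, -, -, -, -, -, -,
    h0, h1, hab1, hab2, hcd1, hcd2, hbc, had, hac, hbd⟩
  obtain ⟨q, hq⟩ := (T.isTree.existsUnique_path a c).exists
  obtain ⟨x, hxs, hx1, hx2, hx3⟩ := T.median a b c q hq
  obtain ⟨y, hys, hy1, hy2, hy3⟩ := T.median a d c q hq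
  have tri1 : T.dist b d ≤ T.dist b x + T.dist x d := T.dist_triangle b x d
  have tri2 : T.dist x d ≤ T.dist x y + T.dist y d := T.dist_triangle x y d
  have sxb : T.dist x b = T.dist b x := T.dist_symm x b
  have syd : T.dist y d = T.dist d y := T.dist_symm y d
  have sxd : T.dist x d = T.dist d x := T.dist_symm x d
  have scd : T.dist c d = T.dist d c := T.dist_symm c d
  have sxy : T.dist x y = T.dist y x := T.dist_symm x y
  rcases T.order3 q hq hxs hys with h | h
  · linarith
  · linarith
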